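/- Let G be a 3-regular graph with 2n vertices whose adjacency spectrum is λ₁,...,λ₂ₙ. Then the adjacency spectrum of the even CFI graph G₀ of G consists of 2λ₁,...,2λ₂ₙ together with the eigenvalue +2 with multiplicity 3n and the eigenvalue −2 with multiplicity 3n. In particular, G₀ (which has 8n ≥ 8 vertices) never has simple spectrum. -/

import Mathlib

open Finset SimpleGraph Polynomial Matrix

section Aux0

theorem even_powerset_three {α : Type*} [DecidableEq α] {a b c : α} (hab : a ≠ b) (hac : a ≠ c)
    (hbc : b ≠ c) :
    ({a,b,c} : Finset α).powerset.filter (fun T => T.card % 2 = 0) = {∅, {a,b}, {a,c}, {b,c}} := by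
  have hbc2 : ({b,c} : Finset α).card = 2 := by rw [card_insert_of_notMem (by simp [hbc])]; rfl
  have hac2 : ({a,c} : Finset α).card = 2 := by rw [card_insert_of_notMem (by simp [hac])]; rfl
  have hab2 : ({a,b} : Finset α).card = 2 := by rw [card_insert_of_notMem (by simp [hab])]; rfl
  have habc3 : ({a,b,c} : Finset α).card = 3 := by
    rw [card_insert_of_notMem (by simp [hab, hac]), hbc2]
  have h1 : ({c} : Finset α).powerset = {∅, {c}} := by
    have : ({c} : Finset α) = insert c ∅ := rfl
    rw [this, powerset_insert, powerset_empty]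
    ext T; simp
  have : ({a,b,c} : Finset α) = insert a (insert b {c}) := rfl
  rw [this, powerset_insert, powerset_insert, h1]
  simp only [image_union, image_insert, image_singleton, insert_union, union_insert]
  rw [show ({{c}} ∪ {{b,c}} ∪ ({{a,c}} ∪ {{a,b,c}}) : Finset (Finset α))
      = {{c},{b,c},{a,c},{a,b,c}} from by ext; simp; tauto]
  have hab2' : (insert a (insert b ∅) : Finset α).card = 2 := hab2
  simp only [filter_insert, filter_singleton, card_empty, card_singleton, hbc2, hac2, hab2, hab2',
    habc3]
  norm_num
  ext T; simp; tauto

theorem pair_ne_pair {α : Type*} [DecidableEq α] {a b c : α} (hbc : b ≠ c) :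
    ({a,b} : Finset α) ≠ {a,c} := by
  intro h
  have hb : b ∈ ({a,c} : Finset α) := h ▸ (by simp)
  have hc : c ∈ ({a,b} : Finset α) := h.symm ▸ (by simp)
  simp only [Finset.mem_insert, Finset.mem_singleton] at hb hc
  rcases hb with hb | hb
  · rcases hc with hc | hc
    · exact hbc (hb.trans hc.symm)
    · exact hbc hc.symm
  · exact hbc hb

theorem sum_four {α M : Type*} [DecidableEq α] [AddCommMonoid M] {w x y z : α}
    (hwx : w≠x) (hwy : w≠y) (hwz : w≠z) (hxy : x≠y) (hxz : x≠z) (hyz : y≠z) (f : α → M) :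
    ∑ t ∈ ({w,x,y,z} : Finset α), f t = f w + (f x + (f y + f z)) := by
  rw [Finset.sum_insert (by simp [hwx, hwy, hwz]), Finset.sum_insert (by simp [hxy, hxz]),
    Finset.sum_insert (by simp [hyz]), Finset.sum_singleton]

end Aux0

variable {V : Type*} [Fintype V] [DecidableEq V]

/-- Vertices of the CFI graph `G_U`. -/
def CFIVert (G : SimpleGraph V) [DecidableRel G.Adj] (U : Finset V) : Type _ :=
  {p : V × Finset (Sym2 V) //
    p.2 ⊆ G.incidenceFinset p.1 ∧ p.2.card % 2 = (if p.1 ∈ U then 1 else 0)}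

/-- The CFI graph `G_U`: `(v,S)` and `(u,T)` are adjacent iff `uv ∈ E(G)` and
`uv ∉ S △ T`. -/
def CFIGraph (G : SimpleGraph V) [DecidableRel G.Adj] (U : Finset V) :
    SimpleGraph (CFIVert G U) where
  Adj a b := G.Adj a.1.1 b.1.1 ∧ s(a.1.1, b.1.1) ∉ symmDiff a.1.2 b.1.2
  symm := by
    constructor
    rintro a b ⟨h1, h2⟩
    refine ⟨h1.symm, ?_⟩
    rwa [Sym2.eq_swap, symmDiff_comm]
  loopless := by constructor; rintro a ⟨h1, _⟩; exact G.irrefl h1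

instance (G : SimpleGraph V) [DecidableRel G.Adj] (U : Finset V) :
    Fintype (CFIVert G U) := by
  unfold CFIVert; infer_instance

instance (G : SimpleGraph V) [DecidableRel G.Adj] (U : Finset V) :
    DecidableEq (CFIVert G U) := by
  unfold CFIVert; infer_instance

instance (G : SimpleGraph V) [DecidableRel G.Adj] (U : Finset V) :
    DecidableRel (CFIGraph G U).Adj := fun a b => by
  unfold CFIGraph; exact instDecidableAnd

section Aux

variable (G : SimpleGraph V) [DecidableRel G.Adj]

lemma cfi_adj_iff (p q : CFIVert G ∅) :
    (CFIGraph G ∅).Adj p q ↔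
      G.Adj p.1.1 q.1.1 ∧ s(p.1.1, q.1.1) ∉ symmDiff p.1.2 q.1.2 := Iff.rfl

/-- The fiber of even-cardinality subsets of the incident edges at a vertex. -/
def cfiFiber (v : V) : Finset (Finset (Sym2 V)) :=
  (G.incidenceFinset v).powerset.filter (fun T => T.card % 2 = 0)

lemma sum_cfi {M : Type*} [AddCommMonoid M] (f : V × Finset (Sym2 V) → M) :
    ∑ p : CFIVert G ∅, f p.val = ∑ v : V, ∑ T ∈ cfiFiber G v, f (v, T) := by
  classical
  have step : ∑ p : CFIVert G ∅, f p.val =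
      ∑ p : {p : V × Finset (Sym2 V) // p.2 ⊆ G.incidenceFinset p.1 ∧
        p.2.card % 2 = (if p.1 ∈ (∅ : Finset V) then 1 else 0)}, f p.val :=
    Fintype.sum_equiv ⟨fun p => ⟨p.val, p.2⟩, fun p => ⟨p.val, p.2⟩, fun _ => rfl, fun _ => rfl⟩
      _ _ fun _ => rfl
  rw [step, ← Finset.sum_subtype (Finset.univ.filter
      (fun p : V × Finset (Sym2 V) => p.2 ⊆ G.incidenceFinset p.1 ∧
        p.2.card % 2 = (if p.1 ∈ (∅ : Finset V) then 1 else 0))) (by simp) f]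
  rw [Finset.sum_filter]
  rw [Fintype.sum_prod_type]
  refine Finset.sum_congr rfl fun v _ => ?_
  rw [← Finset.sum_filter]
  refine Finset.sum_congr ?_ fun T _ => rfl
  ext T
  simp [cfiFiber, Finset.mem_powerset]

lemma fiber_desc {v : V} (h3 : G.degree v = 3) :
    ∃ a b c : Sym2 V, a ≠ b ∧ a ≠ c ∧ b ≠ c ∧ G.incidenceFinset v = {a,b,c} ∧
      cfiFiber G v = {∅, {a,b}, {a,c}, {b,c}} := by
  have hcard : (G.incidenceFinset v).card = 3 := by
    rw [G.card_incidenceFinset_eq_degree]; exact h3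
  obtain ⟨a, b, c, hab, hac, hbc, hs⟩ := Finset.card_eq_three.1 hcard
  exact ⟨a, b, c, hab, hac, hbc, hs, by
    rw [cfiFiber, hs, even_powerset_three hab hac hbc]⟩

lemma fiber_expand {v : V} (h3 : G.degree v = 3) (f : Finset (Sym2 V) → ℝ) :
    ∃ a b c : Sym2 V, a ≠ b ∧ a ≠ c ∧ b ≠ c ∧ G.incidenceFinset v = {a,b,c} ∧
      ∑ T ∈ cfiFiber G v, f T = f ∅ + (f {a,b} + (f {a,c} + f {b,c})) := by
  obtain ⟨a, b, c, hab, hac, hbc, hs, hf⟩ := fiber_desc G h3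
  have n1 : ({a,b} : Finset (Sym2 V)) ≠ {a,c} := pair_ne_pair hbc
  have n2 : ({a,b} : Finset (Sym2 V)) ≠ {b,c} := fun h => by
    have : a ∈ ({b,c} : Finset (Sym2 V)) := h ▸ (by simp)
    simp only [Finset.mem_insert, Finset.mem_singleton] at this
    rcases this with h' | h'; exacts [hab h', hac h']
  have n3 : ({a,c} : Finset (Sym2 V)) ≠ {b,c} := fun h => by
    have : a ∈ ({b,c} : Finset (Sym2 V)) := h ▸ (by simp)
    simp only [Finset.mem_insert, Finset.mem_singleton] at this
    rcases this with h' | h'; exacts [hab h', hac h']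
  refine ⟨a, b, c, hab, hac, hbc, hs, ?_⟩
  rw [hf, sum_four (Ne.symm (Finset.insert_ne_empty _ _)) (Ne.symm (Finset.insert_ne_empty _ _))
    (Ne.symm (Finset.insert_ne_empty _ _)) n1 n2 n3]

/-- Counting lemma: half of the fiber agrees with `S` on a given incident edge. -/
lemma fiber_count {v : V} (h3 : G.degree v = 3) {e : Sym2 V}
    (he : e ∈ G.incidenceFinset v) (S : Finset (Sym2 V)) :
    ∑ T ∈ cfiFiber G v, (if (e ∈ S ↔ e ∈ T) then (1:ℝ) else 0) = 2 := by
  obtain ⟨a, b, c, hab, hac, hbc, hs, hsum⟩ := fiber_expand G h3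
    (fun T => if (e ∈ S ↔ e ∈ T) then (1:ℝ) else 0)
  rw [hsum]
  rw [hs] at he
  simp only [Finset.mem_insert, Finset.mem_singleton] at he
  rcases he with rfl | rfl | rfl <;> by_cases hS : e ∈ S <;>
    simp [hS, hab, hac, hbc, Ne.symm hab, Ne.symm hac, Ne.symm hbc] <;> norm_num

lemma fiber_sign_same {v : V} (h3 : G.degree v = 3) {e : Sym2 V}
    (he : e ∈ G.incidenceFinset v) (S : Finset (Sym2 V)) :
    ∑ T ∈ cfiFiber G v, (if (e ∈ S ↔ e ∈ T) then (1:ℝ) else 0) * (if e ∈ T then -1 else 1)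
      = 2 * (if e ∈ S then -1 else 1) := by
  obtain ⟨a, b, c, hab, hac, hbc, hs, hsum⟩ := fiber_expand G h3
    (fun T => (if (e ∈ S ↔ e ∈ T) then (1:ℝ) else 0) * (if e ∈ T then -1 else 1))
  rw [hsum]
  rw [hs] at he
  simp only [Finset.mem_insert, Finset.mem_singleton] at he
  rcases he with rfl | rfl | rfl <;> by_cases hS : e ∈ S <;>
    simp [hS, hab, hac, hbc, Ne.symm hab, Ne.symm hac, Ne.symm hbc] <;> norm_num

lemma fiber_sign_other {v : V} (h3 : G.degree v = 3) {e1 e2 : Sym2 V}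
    (he1 : e1 ∈ G.incidenceFinset v) (he2 : e2 ∈ G.incidenceFinset v) (hne : e1 ≠ e2)
    (S : Finset (Sym2 V)) :
    ∑ T ∈ cfiFiber G v, (if (e1 ∈ S ↔ e1 ∈ T) then (1:ℝ) else 0) * (if e2 ∈ T then -1 else 1)
      = 0 := by
  obtain ⟨a, b, c, hab, hac, hbc, hs, hsum⟩ := fiber_expand G h3
    (fun T => (if (e1 ∈ S ↔ e1 ∈ T) then (1:ℝ) else 0) * (if e2 ∈ T then -1 else 1))
  rw [hsum]
  rw [hs] at he1 he2
  simp only [Finset.mem_insert, Finset.mem_singleton] at he1 he2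
  rcases he1 with rfl | rfl | rfl <;> rcases he2 with rfl | rfl | rfl <;>
    first
    | exact absurd rfl hne
    | (by_cases hS : e1 ∈ S <;>
        simp [hS, hab, hac, hbc, Ne.symm hab, Ne.symm hac, Ne.symm hbc] <;> norm_num)

lemma fiber_card {v : V} (h3 : G.degree v = 3) : (cfiFiber G v).card = 4 := by
  obtain ⟨a, b, c, hab, hac, hbc, -, hf⟩ := fiber_desc G h3
  have n1 : ({a,b} : Finset (Sym2 V)) ≠ {a,c} := pair_ne_pair hbc
  have n2 : ({a,b} : Finset (Sym2 V)) ≠ {b,c} := fun h => by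
    have : a ∈ ({b,c} : Finset (Sym2 V)) := h ▸ (by simp)
    simp only [Finset.mem_insert, Finset.mem_singleton] at this
    rcases this with h' | h'; exacts [hab h', hac h']
  have n3 : ({a,c} : Finset (Sym2 V)) ≠ {b,c} := fun h => by
    have : a ∈ ({b,c} : Finset (Sym2 V)) := h ▸ (by simp)
    simp only [Finset.mem_insert, Finset.mem_singleton] at this
    rcases this with h' | h'; exacts [hab h', hac h']
  rw [hf]
  rw [Finset.card_insert_of_notMem (by
        simp [Ne.symm (Finset.insert_ne_empty _ _)]),
    Finset.card_insert_of_notMem (by simp [n1, n2]),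
    Finset.card_insert_of_notMem (by simp [n3]), Finset.card_singleton]

end Aux

section Darts

variable (G : SimpleGraph V)

noncomputable def epts (e : G.edgeSet) (b : Bool) : V :=
  if b then (Quot.out (e : Sym2 V)).1 else (Quot.out (e : Sym2 V)).2

lemma edge_epts (e : G.edgeSet) : s(epts G e true, epts G e false) = (e : Sym2 V) := by
  simp only [epts, if_true, if_false, Bool.false_eq_true]
  exact Quot.out_eq _

lemma adj_epts (e : G.edgeSet) : G.Adj (epts G e true) (epts G e false) := by
  rw [← SimpleGraph.mem_edgeSet, edge_epts]; exact e.2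

lemma mem_epts (e : G.edgeSet) (v : V) :
    v ∈ (e : Sym2 V) ↔ v = epts G e true ∨ v = epts G e false := by
  rw [← edge_epts G e, Sym2.mem_iff]

lemma mem_epts_bool (G : SimpleGraph V) (e : G.edgeSet) (v : V) (b : Bool) :
    v ∈ (e : Sym2 V) ↔ v = epts G e b ∨ v = epts G e (!b) := by
  cases b <;> simp only [Bool.not_false, Bool.not_true] <;> rw [mem_epts G e v] <;> tauto

lemma edge_epts_bool (G : SimpleGraph V) (e : G.edgeSet) (b : Bool) :
    s(epts G e (!b), epts G e b) = (e : Sym2 V) := by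
  cases b <;> simp only [Bool.not_false, Bool.not_true]
  · exact edge_epts G e
  · rw [Sym2.eq_swap]; exact edge_epts G e

lemma adj_epts_bool (G : SimpleGraph V) (e : G.edgeSet) (b : Bool) :
    G.Adj (epts G e (!b)) (epts G e b) := by
  cases b <;> simp only [Bool.not_false, Bool.not_true]
  · exact adj_epts G e
  · exact (adj_epts G e).symm

variable [DecidableRel G.Adj]

/-- Summing over pairs `(e,b)` whose chosen endpoint is `v` equals summing over
incident edges. -/
lemma sum_darts_at (v : V) (f : Sym2 V → ℝ) :
    (∑ e : G.edgeSet, ∑ b : Bool, if v = epts G e b then f (e : Sym2 V) else 0)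
      = ∑ ε ∈ G.incidenceFinset v, f ε := by
  have key : ∀ e : G.edgeSet, (∑ b : Bool, if v = epts G e b then f (e : Sym2 V) else 0)
      = if v ∈ (e : Sym2 V) then f (e : Sym2 V) else 0 := by
    intro e
    rw [Fintype.sum_bool]
    by_cases h1 : v = epts G e true
    · have h2 : ¬ v = epts G e false := fun h => (adj_epts G e).ne (h1.symm.trans h)
      have hv : v ∈ (e : Sym2 V) := (mem_epts G e v).2 (Or.inl h1)
      rw [if_pos h1, if_neg h2, if_pos hv, add_zero]
    · by_cases h2 : v = epts G e false
      · have hv : v ∈ (e : Sym2 V) := (mem_epts G e v).2 (Or.inr h2)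
        rw [if_neg h1, if_pos h2, if_pos hv, zero_add]
      · have hv : ¬ v ∈ (e : Sym2 V) := fun h => by
          rcases (mem_epts G e v).1 h with h | h
          exacts [h1 h, h2 h]
        rw [if_neg h1, if_neg h2, if_neg hv, add_zero]
  rw [Finset.sum_congr rfl fun e _ => key e]
  rw [G.incidenceFinset_eq_filter v, Finset.sum_filter]
  exact (Finset.sum_subtype G.edgeFinset (by simp [SimpleGraph.mem_edgeFinset])
    (fun ε => if v ∈ ε then f ε else 0)).symm

end Darts

section Matrices

variable (G : SimpleGraph V) [DecidableRel G.Adj]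

/-- The index type for the block-diagonalized form. -/
abbrev EK := V ⊕ (G.edgeSet × Bool)

noncomputable def Ufun : V × Finset (Sym2 V) → EK G → ℝ := fun p k =>
  match k with
  | Sum.inl w => if p.1 = w then 1 else 0
  | Sum.inr (e, b) => if p.1 = epts G e b then (if (e : Sym2 V) ∈ p.2 then -1 else 1) else 0

noncomputable def Umat : Matrix (CFIVert G ∅) (EK G) ℝ :=
  Matrix.of fun p k => Ufun G p.val k

noncomputable def Bmat : Matrix (EK G) (EK G) ℝ :=
  Matrix.fromBlocks ((2:ℝ) • G.adjMatrix ℝ) 0 0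
    (Matrix.of fun p q : G.edgeSet × Bool => if p.1 = q.1 ∧ p.2 ≠ q.2 then 2 else 0)

lemma sum_pm {α : Type*} [DecidableEq α] (s D : Finset α) (hD : D ⊆ s) :
    ∑ ε ∈ s, (if ε ∈ D then (-1:ℝ) else 1) = (s.card : ℝ) - 2 * D.card := by
  have : ∀ ε, (if ε ∈ D then (-1:ℝ) else 1) = 1 - 2 * (if ε ∈ D then 1 else 0) := by
    intro ε; by_cases h : ε ∈ D <;> simp [h] <;> norm_num
  rw [Finset.sum_congr rfl fun ε _ => this ε, Finset.sum_sub_distrib, ← Finset.mul_sum,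
    Finset.sum_ite_mem, Finset.inter_eq_right.2 hD, Finset.sum_const, Finset.sum_const]
  simp [mul_comm]

lemma card_symmDiff_even {α : Type*} [DecidableEq α] {S T : Finset α}
    (hS : S.card % 2 = 0) (hT : T.card % 2 = 0) : (symmDiff S T).card % 2 = 0 := by
  have h1 : (S \ T).card + (S ∩ T).card = S.card := Finset.card_sdiff_add_card_inter S T
  have h2 : (T \ S).card + (T ∩ S).card = T.card := Finset.card_sdiff_add_card_inter T S
  have h3 : (symmDiff S T).card = (S \ T).card + (T \ S).card := by
    rw [symmDiff_def]
    exact Finset.card_union_of_disjoint (disjoint_sdiff_sdiff)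
  have h4 : (S ∩ T).card = (T ∩ S).card := by rw [Finset.inter_comm]
  omega

lemma hUUt (hreg : G.IsRegularOfDegree 3) : Umat G * (Umat G)ᵀ = (4:ℝ) • 1 := by
  ext p q
  rw [Matrix.mul_apply, Matrix.smul_apply, Matrix.one_apply]
  simp only [Matrix.transpose_apply]
  rw [Fintype.sum_sum_type]
  by_cases hv : p.1.1 = q.1.1
  · have hS := p.2.2
    have hT := q.2.2
    rw [if_neg (Finset.notMem_empty _)] at hS hT
    set v := p.1.1 with hvdef
    set S := p.1.2 with hSdef
    set T := q.1.2 with hTdef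
    have hfirst : (∑ w : V, Umat G p (Sum.inl w) * Umat G q (Sum.inl w)) = 1 := by
      rw [Finset.sum_eq_single v]
      · simp [Umat, Ufun, ← hv, ← hvdef]
      · intro w _ hw
        simp only [Umat, Ufun, Matrix.of_apply]
        rw [if_neg (by exact fun h => hw (h ▸ rfl))]
        ring
      · simp
    have hsecond : (∑ k : G.edgeSet × Bool, Umat G p (Sum.inr k) * Umat G q (Sum.inr k))
        = ∑ ε ∈ G.incidenceFinset v, (if ε ∈ symmDiff S T then (-1:ℝ) else 1) := by
      rw [Fintype.sum_prod_type, ← sum_darts_at G v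
        (fun ε => if ε ∈ symmDiff S T then (-1:ℝ) else 1)]
      refine Finset.sum_congr rfl fun e _ => Finset.sum_congr rfl fun b _ => ?_
      simp only [Umat, Ufun, Matrix.of_apply, ← hvdef, ← hv, ← hSdef, ← hTdef]
      by_cases h : v = epts G e b
      · rw [if_pos h, if_pos h, if_pos h]
        have : ((if (e:Sym2 V) ∈ S then (-1:ℝ) else 1) * (if (e:Sym2 V) ∈ T then -1 else 1))
            = if (e:Sym2 V) ∈ symmDiff S T then (-1:ℝ) else 1 := by
          by_cases h1 : (e:Sym2 V) ∈ S <;> by_cases h2 : (e:Sym2 V) ∈ T <;>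
            simp [h1, h2, Finset.mem_symmDiff] <;> norm_num
        exact this
      · rw [if_neg h, if_neg h, if_neg h]; ring
    rw [hfirst, hsecond]
    have hsub : symmDiff S T ⊆ G.incidenceFinset v := by
      have h1 : S ⊆ G.incidenceFinset v := p.2.1
      have h2 : T ⊆ G.incidenceFinset v := hv ▸ q.2.1
      intro ε hε
      rw [Finset.mem_symmDiff] at hε
      rcases hε with ⟨h, _⟩ | ⟨h, _⟩
      exacts [h1 h, h2 h]
    rw [sum_pm _ _ hsub, G.card_incidenceFinset_eq_degree, hreg v]
    have heven : (symmDiff S T).card % 2 = 0 := card_symmDiff_even hS hT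
    have hle : (symmDiff S T).card ≤ 3 := le_trans (Finset.card_le_card hsub)
      (by rw [G.card_incidenceFinset_eq_degree, hreg v])
    by_cases hST : S = T
    · have hpq : p = q := Subtype.ext (Prod.ext hv hST)
      rw [if_pos hpq]
      rw [show symmDiff S T = ∅ from by rw [hST, symmDiff_self]; rfl]
      norm_num
    · have hpq : p ≠ q := fun h => hST (congrArg (fun r => r.val.2) h)
      rw [if_neg hpq]
      have hne : symmDiff S T ≠ ∅ := fun h => hST (Finset.symmDiff_eq_empty.1 h)
      have hpos : 0 < (symmDiff S T).card := Finset.card_pos.2 (Finset.nonempty_iff_ne_empty.2 hne)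
      have : (symmDiff S T).card = 2 := by omega
      rw [this]
      norm_num
  · rw [if_neg (fun h : p = q => hv (h ▸ rfl))]
    have z1 : ∀ w : V, Umat G p (Sum.inl w) * Umat G q (Sum.inl w) = 0 := by
      intro w
      simp only [Umat, Ufun, Matrix.of_apply]
      by_cases h1 : p.1.1 = w
      · rw [if_neg (fun h2 : q.1.1 = w => hv (h1.trans h2.symm)), mul_zero]
      · rw [if_neg h1, zero_mul]
    have z2 : ∀ k : G.edgeSet × Bool, Umat G p (Sum.inr k) * Umat G q (Sum.inr k) = 0 := by
      rintro ⟨e, b⟩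
      simp only [Umat, Ufun, Matrix.of_apply]
      by_cases h1 : p.1.1 = epts G e b
      · rw [if_neg (fun h2 : q.1.1 = epts G e b => hv (h1.trans h2.symm)), mul_zero]
      · rw [if_neg h1, zero_mul]
    rw [Finset.sum_congr rfl fun w _ => z1 w, Finset.sum_congr rfl fun k _ => z2 k]
    simp

lemma hAU (hreg : G.IsRegularOfDegree 3) :
    (CFIGraph G (∅ : Finset V)).adjMatrix ℝ * Umat G = Umat G * Bmat G := by
  have hiff : ∀ (x : Sym2 V) (A B : Finset (Sym2 V)),
      (x ∉ symmDiff A B) ↔ (x ∈ A ↔ x ∈ B) := by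
    intro x A B; rw [Finset.mem_symmDiff]; tauto
  ext p k
  rw [Matrix.mul_apply, Matrix.mul_apply]
  have hL : (∑ q : CFIVert G ∅, (CFIGraph G (∅ : Finset V)).adjMatrix ℝ p q * Umat G q k)
      = ∑ v : V, ∑ T ∈ cfiFiber G v,
          (if G.Adj p.1.1 v ∧ s(p.1.1, v) ∉ symmDiff p.1.2 T then (1:ℝ) else 0)
            * Ufun G (v, T) k := by
    rw [← sum_cfi G (fun r => (if G.Adj p.1.1 r.1 ∧ s(p.1.1, r.1) ∉ symmDiff p.1.2 r.2
      then (1:ℝ) else 0) * Ufun G r k)]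
    refine Finset.sum_congr rfl fun q _ => ?_
    rw [SimpleGraph.adjMatrix_apply]
    exact congrArg (· * Ufun G q.val k) (if_congr (cfi_adj_iff G p q) rfl rfl)
  rw [hL, Fintype.sum_sum_type]
  rcases k with w | ⟨e, b⟩
  · -- vertex column
    have hz : ∀ k : G.edgeSet × Bool, Umat G p (Sum.inr k) * Bmat G (Sum.inr k) (Sum.inl w) = 0 := by
      intro k; simp [Bmat, Matrix.fromBlocks_apply₂₁]
    rw [Finset.sum_congr rfl fun k _ => hz k, Finset.sum_const, smul_zero, add_zero]
    have hR : (∑ u : V, Umat G p (Sum.inl u) * Bmat G (Sum.inl u) (Sum.inl w))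
        = 2 * (if G.Adj p.1.1 w then 1 else 0) := by
      rw [Finset.sum_eq_single p.1.1]
      · simp [Umat, Ufun, Bmat, Matrix.fromBlocks_apply₁₁, SimpleGraph.adjMatrix_apply]
      · intro u _ hu
        simp only [Umat, Ufun, Matrix.of_apply]
        rw [if_neg (fun h : p.1.1 = u => hu (h ▸ rfl))]
        ring
      · simp
    rw [hR]
    have hcollapse : (∑ v : V, ∑ T ∈ cfiFiber G v,
        (if G.Adj p.1.1 v ∧ s(p.1.1, v) ∉ symmDiff p.1.2 T then (1:ℝ) else 0)
          * Ufun G (v, T) (Sum.inl w))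
        = ∑ T ∈ cfiFiber G w,
            (if G.Adj p.1.1 w ∧ s(p.1.1, w) ∉ symmDiff p.1.2 T then (1:ℝ) else 0) := by
      rw [Finset.sum_eq_single w]
      · refine Finset.sum_congr rfl fun T _ => ?_
        simp [Ufun]
      · intro v _ hvw
        refine Finset.sum_eq_zero fun T _ => ?_
        simp [Ufun, hvw]
      · simp
    rw [hcollapse]
    by_cases hA : G.Adj p.1.1 w
    · have he : s(p.1.1, w) ∈ G.incidenceFinset w := by
        rw [SimpleGraph.mem_incidenceFinset]
        exact G.mk'_mem_incidenceSet_right_iff.2 hA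
      have : ∀ T, (if G.Adj p.1.1 w ∧ s(p.1.1, w) ∉ symmDiff p.1.2 T then (1:ℝ) else 0)
          = if (s(p.1.1, w) ∈ p.1.2 ↔ s(p.1.1, w) ∈ T) then (1:ℝ) else 0 := by
        intro T
        exact if_congr (by rw [and_iff_right hA, hiff]) rfl rfl
      rw [Finset.sum_congr rfl fun T _ => this T, fiber_count G (hreg w) he p.1.2]
      rw [if_pos hA]; ring
    · rw [if_neg hA, Finset.sum_eq_zero fun T _ => by rw [if_neg (fun h => hA h.1)]]
      ring
  · -- dart column
    set w0 := epts G e b with hw0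
    have hz : ∀ u : V, Umat G p (Sum.inl u) * Bmat G (Sum.inl u) (Sum.inr (e, b)) = 0 := by
      intro u; simp [Bmat, Matrix.fromBlocks_apply₁₂]
    rw [Finset.sum_congr rfl fun u _ => hz u, Finset.sum_const, smul_zero, zero_add]
    have hR : (∑ k : G.edgeSet × Bool, Umat G p (Sum.inr k) * Bmat G (Sum.inr k) (Sum.inr (e, b)))
        = (if p.1.1 = epts G e (!b) then (if (e : Sym2 V) ∈ p.1.2 then (-1:ℝ) else 1) else 0)
            * 2 := by
      rw [Finset.sum_eq_single (e, !b)]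
      · have h2 : Bmat G (Sum.inr (e, !b)) (Sum.inr (e, b)) = 2 := by
          cases b <;> simp [Bmat, Matrix.fromBlocks_apply₂₂]
        rw [h2]
        rfl
      · rintro ⟨e', b'⟩ _ hk
        simp only [Bmat, Matrix.fromBlocks_apply₂₂, Matrix.of_apply]
        rw [if_neg, mul_zero]
        rintro ⟨h1, h2⟩
        apply hk
        have h1' : e' = e := h1
        subst h1'
        have h2' : b' = !b := by
          have hb : b' ≠ b := h2
          cases b <;> cases b' <;> simp_all
        rw [h2']
      · simp
    rw [hR]
    have hcollapse : (∑ v : V, ∑ T ∈ cfiFiber G v,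
        (if G.Adj p.1.1 v ∧ s(p.1.1, v) ∉ symmDiff p.1.2 T then (1:ℝ) else 0)
          * Ufun G (v, T) (Sum.inr (e, b)))
        = ∑ T ∈ cfiFiber G w0,
            (if G.Adj p.1.1 w0 ∧ s(p.1.1, w0) ∉ symmDiff p.1.2 T then (1:ℝ) else 0)
              * (if (e : Sym2 V) ∈ T then (-1:ℝ) else 1) := by
      rw [Finset.sum_eq_single w0]
      · refine Finset.sum_congr rfl fun T _ => ?_
        simp [Ufun, ← hw0]
      · intro v _ hvw
        refine Finset.sum_eq_zero fun T _ => ?_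
        have : Ufun G (v, T) (Sum.inr (e, b)) = 0 := by
          simp only [Ufun]
          rw [if_neg (by exact fun h => hvw (h.trans hw0.symm))]
        rw [this, mul_zero]
      · simp
    rw [hcollapse]
    by_cases hA : G.Adj p.1.1 w0
    · have hw0mem : w0 ∈ (e : Sym2 V) := (mem_epts_bool G e w0 b).2 (Or.inl rfl)
      have heinc : (e : Sym2 V) ∈ G.incidenceFinset w0 := by
        rw [SimpleGraph.mem_incidenceFinset]
        exact ⟨e.2, hw0mem⟩
      have hεinc : s(p.1.1, w0) ∈ G.incidenceFinset w0 := by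
        rw [SimpleGraph.mem_incidenceFinset]
        exact G.mk'_mem_incidenceSet_right_iff.2 hA
      have hsimp : ∀ T, (if G.Adj p.1.1 w0 ∧ s(p.1.1, w0) ∉ symmDiff p.1.2 T then (1:ℝ) else 0)
          = if (s(p.1.1, w0) ∈ p.1.2 ↔ s(p.1.1, w0) ∈ T) then (1:ℝ) else 0 := by
        intro T
        exact if_congr (by rw [and_iff_right hA, hiff]) rfl rfl
      rw [Finset.sum_congr rfl fun T _ => congrArg (· * _) (hsimp T)]
      by_cases hveq : p.1.1 = epts G e (!b)
      · have hε : s(p.1.1, w0) = (e : Sym2 V) := by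
          rw [hveq, hw0]; exact edge_epts_bool G e b
        rw [Finset.sum_congr rfl fun T _ => by rw [hε]]
        rw [fiber_sign_same G (hreg w0) heinc p.1.2]
        rw [if_pos hveq]; ring
      · have hε : s(p.1.1, w0) ≠ (e : Sym2 V) := by
          intro h
          have hmem : p.1.1 ∈ (e : Sym2 V) := h ▸ Sym2.mem_mk_left _ _
          rcases (mem_epts_bool G e p.1.1 b).1 hmem with h' | h'
          · exact hA.ne (h'.trans hw0.symm)
          · exact hveq h'
        rw [fiber_sign_other G (hreg w0) hεinc heinc hε p.1.2]
        rw [if_neg hveq]; ring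
    · rw [Finset.sum_eq_zero fun T _ => by rw [if_neg (fun h => hA h.1), zero_mul]]
      rw [if_neg (fun h : p.1.1 = epts G e (!b) => hA (h ▸ adj_epts_bool G e b))]
      ring

lemma card_cfi (hreg : G.IsRegularOfDegree 3) :
    Fintype.card (CFIVert G ∅) = 4 * Fintype.card V := by
  have h := sum_cfi G (fun _ => (1:ℕ))
  rw [← Finset.card_univ, Finset.card_eq_sum_ones, h]
  have : ∀ v : V, ∑ _T ∈ cfiFiber G v, 1 = 4 := by
    intro v
    rw [← Finset.card_eq_sum_ones, fiber_card G (hreg v)]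
  rw [Finset.sum_congr rfl fun v _ => this v, Finset.sum_const, Finset.card_univ, smul_eq_mul,
    mul_comm]

lemma card_edges (hreg : G.IsRegularOfDegree 3) :
    2 * G.edgeFinset.card = 3 * Fintype.card V := by
  rw [← G.sum_degrees_eq_twice_card_edges]
  simp [hreg _, Finset.sum_const, Finset.card_univ, mul_comm]

end Matrices

/-- evaluation of the characteristic polynomial. -/
lemma eval_charpoly' {m : Type*} [Fintype m] [DecidableEq m] (M : Matrix m m ℝ) (x : ℝ) :
    (M.charpoly).eval x = (x • (1 : Matrix m m ℝ) - M).det := by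
  rw [Matrix.charpoly, ← Polynomial.coe_evalRingHom, RingHom.map_det]
  congr 1
  ext i j
  by_cases h : i = j <;>
    simp [Matrix.charmatrix_apply, Matrix.map_apply, h, Matrix.one_apply, Matrix.diagonal_apply]

/-- Let `G` be a 3-regular graph on `2n ≥ 2` vertices with adjacency
spectrum `λ₁, …, λ₂ₙ` (i.e. `charpoly = ∏ᵢ (X - λᵢ)`).  Then the adjacency spectrum of
the even CFI graph `G₀ = G_∅` consists of `2λ₁, …, 2λ₂ₙ` together with `+2` and `-2`
each with multiplicity `3n`.  In particular `G₀` never has simple spectrum. -/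
theorem cfi_even_graph_spectrum
    (G : SimpleGraph V) [DecidableRel G.Adj] (n : ℕ) (hn : 1 ≤ n)
    (hcard : Fintype.card V = 2 * n) (hreg : G.IsRegularOfDegree 3)
    (lam : Fin (2 * n) → ℝ)
    (hlam : (G.adjMatrix ℝ).charpoly = ∏ i, (X - C (lam i))) :
    ((CFIGraph G (∅ : Finset V)).adjMatrix ℝ).charpoly
        = (∏ i : Fin (2 * n), (X - C (2 * lam i)))
            * (X - C 2) ^ (3 * n) * (X + C 2) ^ (3 * n) ∧
    ¬ ∃ mu : Fin (8 * n) → ℝ, Function.Injective mu ∧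
        ((CFIGraph G (∅ : Finset V)).adjMatrix ℝ).charpoly = ∏ i, (X - C (mu i)) := by
  classical
  have hedge : 2 * G.edgeFinset.card = 3 * Fintype.card V := card_edges G hreg
  have hedgecard : Fintype.card G.edgeSet = 3 * n := by
    have h1 : G.edgeFinset.card = Fintype.card G.edgeSet := by
      rw [SimpleGraph.edgeFinset, Set.toFinset_card]
    omega
  have hcEK : Fintype.card (EK G) = 8 * n := by
    rw [Fintype.card_sum, Fintype.card_prod, Fintype.card_bool, hedgecard, hcard]
    ring
  have hcCFI : Fintype.card (CFIVert G ∅) = 8 * n := by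
    rw [card_cfi G hreg, hcard]; ring
  let eqv : CFIVert G ∅ ≃ EK G := Fintype.equivOfCardEq (by rw [hcCFI, hcEK])
  set A0 := (CFIGraph G (∅ : Finset V)).adjMatrix ℝ with hA0
  set W : Matrix (EK G) (EK G) ℝ := (Umat G).submatrix eqv.symm id with hW
  have hWWt : W * Wᵀ = (4:ℝ) • 1 := by
    have h6 : W * Wᵀ = ((Umat G) * (Umat G)ᵀ).submatrix eqv.symm eqv.symm := by
      rw [hW, Matrix.transpose_submatrix]
      have h7 := Matrix.submatrix_mul_equiv (Umat G) (Umat G)ᵀ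
        (⇑eqv.symm) (Equiv.refl (EK G)) (⇑eqv.symm)
      simpa using h7
    rw [h6, hUUt G hreg]
    ext i j
    simp [Matrix.submatrix_apply, Matrix.one_apply, eqv.symm.injective.eq_iff]
  have hW0 : W.det ≠ 0 := by
    intro h0
    have h4 : W.det * W.det = (4:ℝ) ^ Fintype.card (EK G) := by
      have h5 := congrArg Matrix.det hWWt
      rwa [Matrix.det_mul, Matrix.det_transpose, Matrix.det_smul, Matrix.det_one, mul_one] at h5
    rw [h0, mul_zero] at h4
    exact (pow_ne_zero _ (by norm_num : (4:ℝ) ≠ 0)) h4.symm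
  have hA'W : (A0.submatrix eqv.symm eqv.symm) * W = W * Bmat G := by
    calc (A0.submatrix eqv.symm eqv.symm) * W
        = (A0 * Umat G).submatrix eqv.symm id := by
          rw [hW]
          exact Matrix.submatrix_mul_equiv A0 (Umat G) eqv.symm eqv.symm id
      _ = (Umat G * Bmat G).submatrix eqv.symm id := by rw [hA0, hAU G hreg]
      _ = W * Bmat G := by
          rw [hW]
          have h7 := Matrix.submatrix_mul_equiv (Umat G) (Bmat G)
            (⇑eqv.symm) (Equiv.refl (EK G)) (id : EK G → EK G)
          simp only [Equiv.coe_refl, Matrix.submatrix_id_id] at h7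
          exact h7.symm
  have keydet : ∀ x : ℝ, (x • (1 : Matrix (CFIVert G ∅) (CFIVert G ∅) ℝ) - A0).det
      = (x • (1 : Matrix (EK G) (EK G) ℝ) - Bmat G).det := by
    intro x
    rw [← Matrix.det_submatrix_equiv_self eqv.symm (x • 1 - A0)]
    have h2 : (x • (1 : Matrix (CFIVert G ∅) (CFIVert G ∅) ℝ) - A0).submatrix eqv.symm eqv.symm
        = x • 1 - A0.submatrix eqv.symm eqv.symm := by
      ext i j
      simp [Matrix.submatrix_apply, Matrix.one_apply, eqv.symm.injective.eq_iff]
    rw [h2]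
    have h3 : (x • 1 - A0.submatrix eqv.symm eqv.symm) * W = W * (x • 1 - Bmat G) := by
      rw [sub_mul, mul_sub, hA'W, smul_mul_assoc, one_mul, mul_smul_comm, mul_one]
    have h4 := congrArg Matrix.det h3
    rw [Matrix.det_mul, Matrix.det_mul, mul_comm W.det] at h4
    exact mul_right_cancel₀ hW0 h4
  set Mb : Matrix (G.edgeSet × Bool) (G.edgeSet × Bool) ℝ :=
    Matrix.of (fun p q : G.edgeSet × Bool => if p.1 = q.1 ∧ p.2 ≠ q.2 then 2 else 0) with hMb
  have hblock : ∀ x : ℝ, (x • (1 : Matrix (EK G) (EK G) ℝ) - Bmat G).det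
      = (x • (1 : Matrix V V ℝ) - (2:ℝ) • G.adjMatrix ℝ).det
        * (x • (1 : Matrix (G.edgeSet × Bool) (G.edgeSet × Bool) ℝ) - Mb).det := by
    intro x
    have hsplit : x • (1 : Matrix (EK G) (EK G) ℝ) - Bmat G
        = Matrix.fromBlocks (x • 1 - (2:ℝ) • G.adjMatrix ℝ) 0 0 (x • 1 - Mb) := by
      ext i j
      rcases i with i | i <;> rcases j with j | j <;>
        simp [Bmat, hMb, Matrix.one_apply, Matrix.fromBlocks_apply₁₁, Matrix.fromBlocks_apply₁₂,
          Matrix.fromBlocks_apply₂₁, Matrix.fromBlocks_apply₂₂]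
    rw [hsplit, Matrix.det_fromBlocks_zero₂₁]
  have hAdet : ∀ x : ℝ, (x • (1 : Matrix V V ℝ) - (2:ℝ) • G.adjMatrix ℝ).det
      = ∏ i : Fin (2*n), (x - 2 * lam i) := by
    intro x
    have hev : ∀ y : ℝ, (y • (1 : Matrix V V ℝ) - G.adjMatrix ℝ).det = ∏ i, (y - lam i) := by
      intro y
      have h1 := eval_charpoly' (G.adjMatrix ℝ) y
      rw [hlam] at h1
      rw [← h1]
      simp [eval_prod]
    have h2 : x • (1 : Matrix V V ℝ) - (2:ℝ) • G.adjMatrix ℝ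
        = (2:ℝ) • ((x/2) • (1 : Matrix V V ℝ) - G.adjMatrix ℝ) := by
      have h25 : (2:ℝ) * (x/2) = x := by ring
      rw [smul_sub, smul_smul, h25]
    rw [h2, Matrix.det_smul, hev (x/2), hcard]
    rw [show ((2:ℝ) ^ (2*n)) = ∏ _i : Fin (2*n), (2:ℝ) from by
      rw [Finset.prod_const, Finset.card_univ, Fintype.card_fin]]
    rw [← Finset.prod_mul_distrib]
    exact Finset.prod_congr rfl fun i _ => by ring
  have hMdet : ∀ x : ℝ,
      (x • (1 : Matrix (G.edgeSet × Bool) (G.edgeSet × Bool) ℝ) - Mb).det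
        = (x^2 - 4)^(3*n) := by
    intro x
    rw [← Matrix.det_submatrix_equiv_self (Equiv.prodComm Bool G.edgeSet) (x • 1 - Mb)]
    have h2 : (x • (1 : Matrix (G.edgeSet × Bool) (G.edgeSet × Bool) ℝ) - Mb).submatrix
        (Equiv.prodComm Bool G.edgeSet) (Equiv.prodComm Bool G.edgeSet)
        = Matrix.blockDiagonal (fun _ : G.edgeSet =>
            Matrix.of (fun b b' : Bool => if b = b' then x else -2)) := by
      show (x • 1 - Mb).submatrix (Equiv.prodComm Bool G.edgeSet) (Equiv.prodComm Bool G.edgeSet)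
          = _
      ext ⟨b, e⟩ ⟨b', e'⟩
      rw [Matrix.blockDiagonal_apply, Matrix.submatrix_apply]
      simp only [Equiv.prodComm_apply, Prod.swap_prod_mk, Matrix.sub_apply, Matrix.smul_apply,
        Matrix.one_apply, Matrix.of_apply, Prod.mk.injEq]
      by_cases he : e = e' <;> by_cases hb : b = b' <;>
        simp [he, hb, hMb] <;> try ring
    rw [h2, Matrix.det_blockDiagonal]
    have h3 : (Matrix.of (fun b b' : Bool => if b = b' then x else -2)).det = x^2 - 4 := by
      rw [← Matrix.det_submatrix_equiv_self finTwoEquiv, Matrix.det_fin_two]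
      norm_num [Matrix.submatrix_apply, finTwoEquiv]
      ring
    rw [Finset.prod_congr rfl (fun e _ => h3), Finset.prod_const, Finset.card_univ, hedgecard]
  have main1 : A0.charpoly = (∏ i : Fin (2 * n), (X - C (2 * lam i)))
      * (X - C 2) ^ (3 * n) * (X + C 2) ^ (3 * n) := by
    apply Polynomial.funext
    intro x
    rw [eval_charpoly', keydet x, hblock x, hAdet x, hMdet x]
    simp only [eval_mul, eval_pow, eval_prod, eval_sub, eval_add, eval_X, eval_C]
    rw [show (x^2 - (4:ℝ)) = (x-2)*(x+2) from by ring, mul_pow]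
    ring
  refine ⟨main1, ?_⟩
  rintro ⟨mu, hinj, heq⟩
  have hsq : (X - C (2:ℝ)) * (X - C 2) ∣ ∏ i, (X - C (mu i)) := by
    rw [← heq, main1]
    have h1 : (X - C (2:ℝ)) * (X - C 2) ∣ (X - C 2) ^ (3*n) := by
      rw [← sq]
      exact pow_dvd_pow _ (by omega)
    exact h1.trans ⟨(∏ i : Fin (2 * n), (X - C (2 * lam i))) * (X + C 2) ^ (3 * n), by ring⟩
  have hsf : Squarefree (∏ i, (X - C (mu i))) :=
    (Polynomial.separable_prod_X_sub_C_iff.2 hinj).squarefree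
  exact Polynomial.not_isUnit_X_sub_C (2:ℝ) (hsf _ hsq)
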